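/- Let T ∈ B_{A^{1/2}}(H). Then the topological boundary of σ_A(T) is contained in σ_{A,app}(T) ∪ {conj(λ) : λ ∈ σ_{A,app}(T^◇)}. -/

import Mathlib

open Filter Topology ContinuousLinearMap

variable {H : Type*} [NormedAddCommGroup H] [InnerProductSpace ℂ H] [CompleteSpace H]

/-- The `A`-seminorm `‖x‖_A = ⟨Ax,x⟩^{1/2}`. -/
noncomputable def anorm (A : H →L[ℂ] H) (x : H) : ℝ :=
  Real.sqrt (inner ℂ (A x) x : ℂ).re

/-- `B_{A^{1/2}}(H)`: the `A`-bounded operators. -/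
def MemBAhalf (A T : H →L[ℂ] H) : Prop :=
  ∃ d > 0, ∀ ξ : H, anorm A (T ξ) ≤ d * anorm A ξ

/-- `B_A(H)`: operators admitting an `A`-adjoint. -/
def MemBA (A T : H →L[ℂ] H) : Prop :=
  Set.range (fun x => ContinuousLinearMap.adjoint T (A x)) ⊆ Set.range A

/-- A-invertibility in `B_{A^{1/2}}(H)`. -/
def AInvertibleHalf (A T : H →L[ℂ] H) : Prop :=
  ∃ S : H →L[ℂ] H, S ≠ 0 ∧ MemBAhalf A S ∧ A ∘L T ∘L S = A ∧ A ∘L S ∘L T = A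

/-- A-invertibility in `B_A(H)`. -/
def AInvertibleBA (A T : H →L[ℂ] H) : Prop :=
  ∃ S : H →L[ℂ] H, S ≠ 0 ∧ MemBA A S ∧ A ∘L T ∘L S = A ∧ A ∘L S ∘L T = A

/-- The `A`-approximate point spectrum. -/
def sigmaAapp (A T : H →L[ℂ] H) : Set ℂ :=
  {lam | ∃ x : ℕ → H, (∀ n, anorm A (x n) = 1) ∧
    Tendsto (fun n => anorm A (T (x n) - lam • x n)) atTop (nhds 0)}

/-- The `A`-spectrum. -/
def sigmaA (A T : H →L[ℂ] H) : Set ℂ :=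
  {lam | ¬ AInvertibleHalf A (lam • (1 : H →L[ℂ] H) - T)}

/-- The `A`-numerical range. -/
def WA (A T : H →L[ℂ] H) : Set ℂ :=
  {z | ∃ x : H, anorm A x = 1 ∧ z = (inner ℂ (A (T x)) x : ℂ)}

/-- The `A`-operator seminorm, sup over the closure of the range of `A`. -/
noncomputable def AopnormCl (A T : H →L[ℂ] H) : ℝ :=
  sSup {r | ∃ ξ ∈ closure (Set.range A), anorm A ξ ≤ 1 ∧ r = anorm A (T ξ)}

/-- The `A`-operator seminorm, sup over all vectors of `A`-seminorm at most one. -/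
noncomputable def Aopnorm (A T : H →L[ℂ] H) : ℝ :=
  sSup {r | ∃ ξ : H, anorm A ξ ≤ 1 ∧ r = anorm A (T ξ)}

/-- The `A`-numerical radius. -/
noncomputable def wA (A T : H →L[ℂ] H) : ℝ :=
  sSup {r | ∃ x : H, anorm A x = 1 ∧ r = ‖(inner ℂ (A (T x)) x : ℂ)‖}

/-- The `A`-reduced minimum modulus. -/
noncomputable def gammaA (A T : H →L[ℂ] H) : ℝ :=
  sInf {r | ∃ ξ : H, (∀ y : H, anorm A (T y) = 0 → (inner ℂ (A ξ) y : ℂ) = 0) ∧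
    anorm A ξ = 1 ∧ r = anorm A (T ξ)}

/-- closure of the range of `A` as a submodule. -/
noncomputable def rangeClosure (A : H →L[ℂ] H) : Submodule ℂ H :=
  (LinearMap.range (A : H →ₗ[ℂ] H)).topologicalClosure

noncomputable instance (A : H →L[ℂ] H) : CompleteSpace (rangeClosure A) :=
  (Submodule.isClosed_topologicalClosure _).completeSpace_coe

/-- orthogonal projection onto the closure of the range of `A`, as an operator on `H`. -/
noncomputable def Pcl (A : H →L[ℂ] H) : H →L[ℂ] H :=
  (rangeClosure A).subtypeL ∘L (rangeClosure A).orthogonalProjection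


set_option maxHeartbeats 1000000

section Aux

variable (sqrtA : H →L[ℂ] H)

private lemma sa_inner {sqrtA : H →L[ℂ] H} (hsqpos : sqrtA.IsPositive) (x y : H) :
    (inner ℂ (sqrtA x) y : ℂ) = inner ℂ x (sqrtA y) := by
  conv_lhs => rw [← hsqpos.isSelfAdjoint.adjoint_eq]
  exact ContinuousLinearMap.adjoint_inner_left sqrtA y x

private lemma anorm_eq_norm {A sqrtA : H →L[ℂ] H} (hsqpos : sqrtA.IsPositive)
    (hsq : sqrtA ∘L sqrtA = A) (x : H) : anorm A x = ‖sqrtA x‖ := by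
  have hx : A x = sqrtA (sqrtA x) := by rw [← hsq]; rfl
  have h1 : (inner ℂ (A x) x : ℂ) = inner ℂ (sqrtA x) (sqrtA x) := by
    rw [hx, sa_inner hsqpos]
  rw [anorm, h1]
  have h3 : (inner ℂ (sqrtA x) (sqrtA x) : ℂ).re = ‖sqrtA x‖ ^ 2 := by
    simpa using inner_self_eq_norm_sq (𝕜 := ℂ) (sqrtA x)
  rw [h3]
  exact Real.sqrt_sq (norm_nonneg _)

private lemma bound_of_not_mem {A sqrtA : H →L[ℂ] H} (hsqpos : sqrtA.IsPositive)
    (hsq : sqrtA ∘L sqrtA = A) (T : H →L[ℂ] H) (μ : ℂ) (h : μ ∉ sigmaAapp A T) :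
    ∃ c > 0, ∀ x : H, c * ‖sqrtA x‖ ≤ ‖sqrtA (T x) - μ • sqrtA x‖ := by
  by_contra hc
  push_neg at hc
  apply h
  have key : ∀ n : ℕ, ∃ x : H, ‖sqrtA (T x) - μ • sqrtA x‖ < (1 / (n + 1)) * ‖sqrtA x‖ :=
    fun n => hc (1 / (n + 1)) (by positivity)
  choose f hf using key
  have hpos : ∀ n, 0 < ‖sqrtA (f n)‖ := by
    intro n
    rcases (norm_nonneg (sqrtA (f n))).lt_or_eq with h' | h'
    · exact h'
    · exfalso
      have := hf n
      rw [← h'] at this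
      simp at this
      exact absurd this (not_lt.mpr (norm_nonneg _))
  refine ⟨fun n => ((‖sqrtA (f n)‖)⁻¹ : ℂ) • f n, fun n => ?_, ?_⟩
  · rw [anorm_eq_norm hsqpos hsq, map_smul, norm_smul]
    simp [abs_of_pos (hpos n), inv_mul_cancel₀ (ne_of_gt (hpos n))]
  · have hb : ∀ n : ℕ,
        anorm A (T (((‖sqrtA (f n)‖)⁻¹ : ℂ) • f n) - μ • ((‖sqrtA (f n)‖)⁻¹ : ℂ) • f n)
          ≤ 1 / (n + 1) := by
      intro n
      have harg : T (((‖sqrtA (f n)‖)⁻¹ : ℂ) • f n) - μ • ((‖sqrtA (f n)‖)⁻¹ : ℂ) • f n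
          = ((‖sqrtA (f n)‖)⁻¹ : ℂ) • (T (f n) - μ • f n) := by
        rw [map_smul, smul_sub, smul_comm]
      rw [anorm_eq_norm hsqpos hsq, harg, map_smul, norm_smul]
      have h2 : sqrtA (T (f n) - μ • f n) = sqrtA (T (f n)) - μ • sqrtA (f n) := by
        rw [map_sub, map_smul]
      rw [h2]
      simp only [norm_inv, Complex.norm_real, Real.norm_eq_abs, abs_of_pos (hpos n)]
      calc ‖sqrtA (f n)‖⁻¹ * ‖sqrtA (T (f n)) - μ • sqrtA (f n)‖
          ≤ ‖sqrtA (f n)‖⁻¹ * ((1 / (n + 1)) * ‖sqrtA (f n)‖) := by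
            apply mul_le_mul_of_nonneg_left (le_of_lt (hf n)) (by positivity)
        _ = 1 / (n + 1) := by
            field_simp
            exact div_self (ne_of_gt (hpos n))
    apply squeeze_zero (fun n => by rw [anorm_eq_norm hsqpos hsq]; exact norm_nonneg _) hb
    exact tendsto_one_div_add_atTop_nhds_zero_nat

private lemma crux (A T sqrtA Tdia : H →L[ℂ] H) (hA : A.IsPositive) (hA0 : A ≠ 0)
    (hsqpos : sqrtA.IsPositive) (hsq : sqrtA ∘L sqrtA = A)
    (hdia : sqrtA ∘L Tdia = (ContinuousLinearMap.adjoint T) ∘L sqrtA)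
    (ν : ℂ) (c : ℝ) (hc : 0 < c)
    (h1 : ∀ x : H, c * ‖sqrtA x‖ ≤ ‖sqrtA (T x) - ν • sqrtA x‖)
    (h2 : ∀ x : H, c * ‖sqrtA x‖ ≤ ‖sqrtA (Tdia x) - (starRingEnd ℂ ν) • sqrtA x‖) :
    AInvertibleHalf A (ν • (1 : H →L[ℂ] H) - T) := by
  classical
  set K : Submodule ℂ H := (LinearMap.range (sqrtA : H →ₗ[ℂ] H)).topologicalClosure with hKdef
  haveI : CompleteSpace K := (Submodule.isClosed_topologicalClosure _).completeSpace_coe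
  have hKclosed : IsClosed (K : Set H) := Submodule.isClosed_topologicalClosure _
  have hmemK : ∀ x : H, sqrtA x ∈ K := fun x =>
    Submodule.le_topologicalClosure _ (LinearMap.mem_range_self _ x)
  have hKmin : ∀ s : Set H, IsClosed s → (∀ x : H, sqrtA x ∈ s) → (K : Set H) ⊆ s := by
    intro s hs hsub
    rw [hKdef, Submodule.topologicalClosure_coe]
    apply closure_minimal _ hs
    rintro _ ⟨x, rfl⟩
    exact hsub x
  have hsq_apply : ∀ x : H, sqrtA (sqrtA x) = A x := fun x => by rw [← hsq]; rfl
  have hTstar_sq : ∀ x : H, ContinuousLinearMap.adjoint T (sqrtA x) = sqrtA (Tdia x) :=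
    fun x => by simpa using (ContinuousLinearMap.ext_iff.mp hdia x).symm
  have hAmemK : ∀ x : H, A x ∈ K := fun x => by rw [← hsq_apply]; exact hmemK _
  have hAinner : ∀ x y : H, (inner ℂ (A x) y : ℂ) = inner ℂ x (A y) := by
    intro x y
    conv_lhs => rw [← hA.isSelfAdjoint.adjoint_eq]
    exact ContinuousLinearMap.adjoint_inner_left A y x
  have hTstarK : ∀ u : H, u ∈ K → ContinuousLinearMap.adjoint T u ∈ K := by
    intro u hu
    have := hKmin ((⇑(ContinuousLinearMap.adjoint T))⁻¹' (K : Set H))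
      (hKclosed.preimage (ContinuousLinearMap.adjoint T).continuous)
      (fun x => by
        simp only [Set.mem_preimage, SetLike.mem_coe]
        rw [hTstar_sq]; exact hmemK _)
    exact this hu
  have horthker : ∀ w : H, w ∈ Kᗮ → sqrtA w = 0 := by
    intro w hw
    rw [← inner_self_eq_zero (𝕜 := ℂ)]
    rw [sa_inner hsqpos, hsq_apply]
    exact (Submodule.mem_orthogonal' _ _).mp hw (A w) (hAmemK w)
  have hker0 : ∀ z : H, z ∈ K → sqrtA z = 0 → z = 0 := by
    intro z hz hsz
    have hsub : (K : Set H) ⊆ {w : H | (inner ℂ w z : ℂ) = 0} := by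
      apply hKmin
      · exact isClosed_eq (Continuous.inner continuous_id continuous_const) continuous_const
      · intro x
        simp only [Set.mem_setOf_eq]
        rw [sa_inner hsqpos, hsz, inner_zero_right]
    have : (inner ℂ z z : ℂ) = 0 := hsub hz
    exact inner_self_eq_zero.mp this
  set Dop : H →L[ℂ] H := ν • (1 : H →L[ℂ] H) - T with hDopdef
  have hDop_apply : ∀ x : H, Dop x = ν • x - T x := fun x => rfl
  have hDadj : ∀ u : H, ContinuousLinearMap.adjoint Dop u
      = (starRingEnd ℂ ν) • u - ContinuousLinearMap.adjoint T u := by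
    intro u
    apply ext_inner_right ℂ
    intro y
    rw [ContinuousLinearMap.adjoint_inner_left]
    rw [inner_sub_left, inner_smul_left, ContinuousLinearMap.adjoint_inner_left]
    rw [hDop_apply, inner_sub_right, inner_smul_right]
    simp
  have hDadjK : ∀ u : H, u ∈ K → ContinuousLinearMap.adjoint Dop u ∈ K := by
    intro u hu
    rw [hDadj]
    exact K.sub_mem (K.smul_mem _ hu) (hTstarK u hu)
  set V : K →L[ℂ] K :=
    ((ContinuousLinearMap.adjoint Dop) ∘L K.subtypeL).codRestrict K
      (fun u => hDadjK u u.2) with hVdef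
  have hV_coe : ∀ u : K, (V u : H) = ContinuousLinearMap.adjoint Dop (u : H) := fun u => rfl
  -- lower bound for adjoint Dop on K
  have h2K : ∀ u : H, u ∈ K → c * ‖u‖ ≤ ‖ContinuousLinearMap.adjoint Dop u‖ := by
    intro u hu
    have hsub : (K : Set H) ⊆ {w : H | c * ‖w‖ ≤ ‖ContinuousLinearMap.adjoint Dop w‖} := by
      apply hKmin
      · exact isClosed_le (continuous_const.mul continuous_norm)
          ((ContinuousLinearMap.adjoint Dop).continuous.norm)
      · intro x
        simp only [Set.mem_setOf_eq]
        rw [hDadj, hTstar_sq, ← norm_sub_rev]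
        exact h2 x
    exact hsub hu
  have hVlow : ∀ u : K, c * ‖u‖ ≤ ‖V u‖ := by
    intro u
    have : ‖V u‖ = ‖(V u : H)‖ := rfl
    rw [this, hV_coe]
    exact h2K (u : H) u.2
  set cnn : NNReal := ⟨c, hc.le⟩ with hcnndef
  have hcnn : (cnn : ℝ) = c := rfl
  have hanti : AntilipschitzWith cnn⁻¹ V := by
    apply ContinuousLinearMap.antilipschitz_of_bound
    intro u
    rw [NNReal.coe_inv, hcnn, le_inv_mul_iff₀ hc]
    exact hVlow u
  have hVinj : V.ker = ⊥ := (LinearMap.ker_eq_bot (f := (V : K →ₗ[ℂ] K))).mpr hanti.injective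
  have hVrangeClosed : IsClosed (Set.range ⇑V) :=
    (hanti.isClosedEmbedding V.uniformContinuous).isClosed_range
  have hVsurj : V.range = ⊤ := by
    haveI : CompleteSpace (V.range) := by
      have hset : ((V.range : Submodule ℂ K) : Set K) = Set.range ⇑V := by
        rw [LinearMap.coe_range]; rfl
      have : IsClosed ((V.range : Submodule ℂ K) : Set K) := by
        rw [hset]; exact hVrangeClosed
      exact this.completeSpace_coe
    rw [← Submodule.orthogonal_eq_bot_iff]
    rw [Submodule.eq_bot_iff]
    intro u hu
    have hinner : ∀ k : K, (inner ℂ ((k : H)) (Dop (u : H)) : ℂ) = 0 := by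
      intro k
      have h0 : (inner ℂ (V k) u : ℂ) = 0 :=
        (Submodule.mem_orthogonal _ _).mp hu (V k) (LinearMap.mem_range_self _ k)
      rw [Submodule.coe_inner, hV_coe, ContinuousLinearMap.adjoint_inner_left] at h0
      exact h0
    have hsqD : sqrtA (Dop (u : H)) = 0 := by
      apply ext_inner_right ℂ
      intro y
      rw [sa_inner hsqpos, inner_zero_left]
      rw [← inner_conj_symm]
      have := hinner ⟨sqrtA y, hmemK y⟩
      simp only [Submodule.coe_mk] at this
      rw [this]
      simp
    have hsqu : sqrtA (u : H) = 0 := by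
      have h1u := h1 (u : H)
      have heq : sqrtA (T (u : H)) - ν • sqrtA (u : H) = -(sqrtA (Dop (u : H))) := by
        rw [hDop_apply, map_sub, map_smul]
        abel
      rw [heq, hsqD, norm_neg, norm_zero] at h1u
      have h0 : ‖sqrtA (u : H)‖ ≤ 0 := by nlinarith
      rw [← norm_eq_zero]
      exact le_antisymm h0 (norm_nonneg _)
    have : (u : H) = 0 := hker0 (u : H) u.2 hsqu
    exact Subtype.ext this
  set e : K ≃L[ℂ] K := ContinuousLinearEquiv.ofBijective V hVinj hVsurj with hedef
  have he_apply : ∀ k : K, e k = V k := fun k => rfl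
  set Wc : K →L[ℂ] K := (e.symm : K →L[ℂ] K) with hWdef
  have hWV : ∀ k : K, Wc (V k) = k := by
    intro k
    have : Wc (e k) = k := e.symm_apply_apply k
    rwa [he_apply] at this
  have hVW : ∀ k : K, V (Wc k) = k := by
    intro k
    have : e (e.symm k) = k := e.apply_symm_apply k
    rwa [he_apply] at this
  set Sa : K →L[ℂ] K := ContinuousLinearMap.adjoint Wc with hSadef
  set P : H →L[ℂ] K := K.orthogonalProjection with hPdef
  set S : H →L[ℂ] H := K.subtypeL ∘L Sa ∘L P with hSdef
  have hS_apply : ∀ x : H, S x = (Sa (P x) : H) := fun x => rfl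
  have hprojInner : ∀ (z w : H), w ∈ K → (inner ℂ ((P z : K) : H) w : ℂ) = inner ℂ z w := by
    intro z w hw
    have h0 := Submodule.starProjection_inner_eq_zero z w hw
    rw [inner_sub_left, sub_eq_zero] at h0
    exact h0.symm
  have hsqP : ∀ z : H, sqrtA ((P z : K) : H) = sqrtA z := by
    intro z
    have hmem : z - ((P z : K) : H) ∈ Kᗮ := Submodule.sub_starProjection_mem_orthogonal z
    have := horthker _ hmem
    rw [map_sub, sub_eq_zero] at this
    exact this.symm
  have hadjV : ∀ a : K, ContinuousLinearMap.adjoint V a = P (Dop (a : H)) := by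
    intro a
    apply ext_inner_right ℂ
    intro b
    rw [ContinuousLinearMap.adjoint_inner_left]
    rw [Submodule.coe_inner, hV_coe, ContinuousLinearMap.adjoint_inner_right]
    rw [Submodule.coe_inner]
    rw [hprojInner (Dop (a : H)) (b : H) b.2]
  have hVSa : ∀ k : K, ContinuousLinearMap.adjoint V (Sa k) = k := by
    intro k
    apply ext_inner_right ℂ
    intro b
    rw [ContinuousLinearMap.adjoint_inner_left, hSadef,
      ContinuousLinearMap.adjoint_inner_left, hWV]
  have hsqDSa : ∀ z : H, sqrtA (Dop ((Sa (P z) : K) : H)) = sqrtA z := by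
    intro z
    rw [← hsqP (Dop ((Sa (P z) : K) : H))]
    have : P (Dop ((Sa (P z) : K) : H)) = P z := by
      rw [← hadjV, hVSa]
    rw [this, hsqP]
  -- the three properties of S
  have hSmem : MemBAhalf A S := by
    refine ⟨c⁻¹, by positivity, fun x => ?_⟩
    rw [anorm_eq_norm hsqpos hsq, anorm_eq_norm hsqpos hsq, hS_apply]
    set u : H := ((Sa (P x) : K) : H) with hudef
    have h1u := h1 u
    have heq : sqrtA (T u) - ν • sqrtA u = -(sqrtA (Dop u)) := by
      rw [hDop_apply, map_sub, map_smul]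
      abel
    rw [heq, norm_neg, hsqDSa] at h1u
    calc ‖sqrtA u‖ = c⁻¹ * (c * ‖sqrtA u‖) := by field_simp
      _ ≤ c⁻¹ * ‖sqrtA x‖ := mul_le_mul_of_nonneg_left h1u (by positivity)
  have hST : A ∘L Dop ∘L S = A := by
    ext x
    apply ext_inner_right ℂ
    intro v
    have hkv : A v ∈ K := hAmemK v
    set kv : K := ⟨A v, hkv⟩ with hkvdef
    have hcoe_kv : (kv : H) = A v := rfl
    calc (inner ℂ ((A ∘L Dop ∘L S) x) v : ℂ)
        = inner ℂ (Dop (S x)) (A v) := by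
          rw [ContinuousLinearMap.comp_apply, ContinuousLinearMap.comp_apply, hAinner]
      _ = inner ℂ (S x) (ContinuousLinearMap.adjoint Dop (A v)) :=
          (ContinuousLinearMap.adjoint_inner_right Dop (S x) (A v)).symm
      _ = inner ℂ ((Sa (P x) : K) : H) ((V kv : K) : H) := by
          rw [hS_apply, hV_coe, hcoe_kv]
      _ = inner ℂ (Sa (P x)) (V kv) := (Submodule.coe_inner K _ _).symm
      _ = inner ℂ (P x) (Wc (V kv)) := by
          rw [hSadef, ContinuousLinearMap.adjoint_inner_left]
      _ = inner ℂ (P x) kv := by rw [hWV]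
      _ = inner ℂ ((P x : K) : H) (A v) := by rw [Submodule.coe_inner, hcoe_kv]
      _ = inner ℂ x (A v) := hprojInner x (A v) hkv
      _ = inner ℂ (A x) v := (hAinner x v).symm
  have hTS : A ∘L S ∘L Dop = A := by
    ext x
    apply ext_inner_right ℂ
    intro v
    have hkv : A v ∈ K := hAmemK v
    set kv : K := ⟨A v, hkv⟩ with hkvdef
    have hcoe_kv : (kv : H) = A v := rfl
    calc (inner ℂ ((A ∘L S ∘L Dop) x) v : ℂ)
        = inner ℂ (S (Dop x)) (A v) := by
          rw [ContinuousLinearMap.comp_apply, ContinuousLinearMap.comp_apply, hAinner]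
      _ = inner ℂ ((Sa (P (Dop x)) : K) : H) ((kv : K) : H) := by
          rw [hS_apply, hcoe_kv]
      _ = inner ℂ (Sa (P (Dop x))) kv := (Submodule.coe_inner K _ _).symm
      _ = inner ℂ (P (Dop x)) (Wc kv) := by
          rw [hSadef, ContinuousLinearMap.adjoint_inner_left]
      _ = inner ℂ ((P (Dop x) : K) : H) ((Wc kv : K) : H) := Submodule.coe_inner K _ _
      _ = inner ℂ (Dop x) ((Wc kv : K) : H) := hprojInner (Dop x) _ (Wc kv).2
      _ = inner ℂ x (ContinuousLinearMap.adjoint Dop ((Wc kv : K) : H)) :=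
          (ContinuousLinearMap.adjoint_inner_right Dop x _).symm
      _ = inner ℂ x ((V (Wc kv) : K) : H) := by rw [hV_coe]
      _ = inner ℂ x (A v) := by rw [hVW, hcoe_kv]
      _ = inner ℂ (A x) v := (hAinner x v).symm
  have hS0 : S ≠ 0 := by
    have hx0 : ∃ x : H, A x ≠ 0 := by
      by_contra hax
      push_neg at hax
      exact hA0 (ContinuousLinearMap.ext fun x => by rw [hax x]; rfl)
    obtain ⟨x₀, hx₀⟩ := hx0
    set k₀ : K := ⟨A x₀, hAmemK x₀⟩ with hk₀def
    have hk₀ne : k₀ ≠ 0 := fun h => hx₀ (by rw [← hk₀def] at *; exact congrArg Subtype.val h)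
    have hPk : P (A x₀) = k₀ := by
      have := Submodule.orthogonalProjection_mem_subspace_eq_self (K := K) k₀
      rw [hPdef]
      exact this
    have hSane : Sa k₀ ≠ 0 := by
      intro h
      apply hk₀ne
      rw [← hVSa k₀, h, map_zero]
    intro h
    have : S (A x₀) = 0 := by rw [h]; rfl
    rw [hS_apply, hPk] at this
    exact hSane (Subtype.ext (by rw [this]; rfl))
  exact ⟨S, hS0, hSmem, hST, hTS⟩

end Aux

/-- `∂σ_A(T) ⊆ σ_{A,app}(T) ∪ (σ_{A,app}(T^◇))^*`. -/
theorem stmt12 (A T sqrtA Tdia : H →L[ℂ] H) (hA : A.IsPositive) (hA0 : A ≠ 0)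
    (hsqpos : sqrtA.IsPositive) (hsq : sqrtA ∘L sqrtA = A)
    (hT : MemBAhalf A T)
    (hdia : sqrtA ∘L Tdia = (ContinuousLinearMap.adjoint T) ∘L sqrtA)
    (hrange : Set.range Tdia ⊆ closure (Set.range sqrtA)) :
    frontier (sigmaA A T) ⊆
      sigmaAapp A T ∪ (fun z : ℂ => starRingEnd ℂ z) '' sigmaAapp A Tdia := by
  intro lam hlam
  by_contra hmem
  rw [Set.mem_union] at hmem
  push_neg at hmem
  obtain ⟨h1m, h2m⟩ := hmem
  have h2m' : (starRingEnd ℂ lam) ∉ sigmaAapp A Tdia := by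
    intro h
    exact h2m ⟨starRingEnd ℂ lam, h, by simp⟩
  obtain ⟨c₁, hc₁, hb1⟩ := bound_of_not_mem hsqpos hsq T lam h1m
  obtain ⟨c₂, hc₂, hb2⟩ := bound_of_not_mem hsqpos hsq Tdia _ h2m'
  set c : ℝ := min c₁ c₂ with hcdef
  have hc : 0 < c := lt_min hc₁ hc₂
  have hcl : lam ∈ closure (sigmaA A T) := frontier_subset_closure hlam
  rw [Metric.mem_closure_iff] at hcl
  obtain ⟨ν, hν, hd⟩ := hcl (c / 2) (by positivity)
  apply hν
  have hdist : ‖lam - ν‖ < c / 2 := by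
    rw [← dist_eq_norm]
    exact hd
  have h1' : ∀ x : H, (c / 2) * ‖sqrtA x‖ ≤ ‖sqrtA (T x) - ν • sqrtA x‖ := by
    intro x
    have htr : ‖sqrtA (T x) - lam • sqrtA x‖
        ≤ ‖sqrtA (T x) - ν • sqrtA x‖ + ‖(lam - ν) • sqrtA x‖ := by
      have : sqrtA (T x) - lam • sqrtA x
          = (sqrtA (T x) - ν • sqrtA x) - (lam - ν) • sqrtA x := by
        rw [sub_smul]; abel
      rw [this]
      exact norm_sub_le _ _
    have h1b := hb1 x
    rw [norm_smul] at htr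
    have hup : ‖lam - ν‖ * ‖sqrtA x‖ ≤ (c / 2) * ‖sqrtA x‖ :=
      mul_le_mul_of_nonneg_right hdist.le (norm_nonneg _)
    have hcc : c ≤ c₁ := min_le_left _ _
    nlinarith [norm_nonneg (sqrtA x), norm_nonneg (sqrtA (T x) - ν • sqrtA x)]
  have h2' : ∀ x : H, (c / 2) * ‖sqrtA x‖
      ≤ ‖sqrtA (Tdia x) - (starRingEnd ℂ ν) • sqrtA x‖ := by
    intro x
    have hdist2 : ‖starRingEnd ℂ lam - starRingEnd ℂ ν‖ < c / 2 := by
      rw [← map_sub]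
      rwa [RCLike.norm_conj]
    have htr : ‖sqrtA (Tdia x) - (starRingEnd ℂ lam) • sqrtA x‖
        ≤ ‖sqrtA (Tdia x) - (starRingEnd ℂ ν) • sqrtA x‖
          + ‖(starRingEnd ℂ lam - starRingEnd ℂ ν) • sqrtA x‖ := by
      have : sqrtA (Tdia x) - (starRingEnd ℂ lam) • sqrtA x
          = (sqrtA (Tdia x) - (starRingEnd ℂ ν) • sqrtA x)
            - (starRingEnd ℂ lam - starRingEnd ℂ ν) • sqrtA x := by
        rw [sub_smul]; abel
      rw [this]
      exact norm_sub_le _ _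
    have h2b := hb2 x
    rw [norm_smul] at htr
    have hup : ‖starRingEnd ℂ lam - starRingEnd ℂ ν‖ * ‖sqrtA x‖ ≤ (c / 2) * ‖sqrtA x‖ :=
      mul_le_mul_of_nonneg_right hdist2.le (norm_nonneg _)
    have hcc : c ≤ c₂ := min_le_right _ _
    nlinarith [norm_nonneg (sqrtA x),
      norm_nonneg (sqrtA (Tdia x) - (starRingEnd ℂ ν) • sqrtA x)]
  exact crux A T sqrtA Tdia hA hA0 hsqpos hsq hdia ν (c / 2) (by positivity) h1' h2'
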